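/- Let A_1,…,A_n be points in ℝ^k with n ≥ 3, and suppose that for i=1,2 and all j ≠ i with j ≠ 3, the distance A_iA_3 < A_iA_j. Then the angle ∠A_1A_3A_2 is strictly greater than π/3. -/
import Mathlib

open EuclideanGeometry

/-- If among points `A 1, …, A n` in `ℝ^k` (with `n ≥ 3`) the point `A r` is strictly
closest to both `A p` and `A q` (where `p, q, r` are distinct indices), then the angle
`∠ (A p) (A r) (A q)` is strictly greater than `π / 3`. -/
theorem stmt8 (k n : ℕ) (hn : 3 ≤ n) (A : Fin n → EuclideanSpace ℝ (Fin k))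
    (p q r : Fin n) (hpq : p ≠ q) (hpr : p ≠ r) (hqr : q ≠ r)
    (hp : ∀ j : Fin n, j ≠ p → j ≠ r → dist (A p) (A r) < dist (A p) (A j))
    (hq : ∀ j : Fin n, j ≠ q → j ≠ r → dist (A q) (A r) < dist (A q) (A j)) :
    Real.pi / 3 < ∠ (A p) (A r) (A q) := by
  have h1 : dist (A p) (A r) < dist (A p) (A q) := hp q (Ne.symm hpq) hqr
  have h2 : dist (A q) (A r) < dist (A q) (A p) := hq p hpq hpr
  have hpi : (0:ℝ) < Real.pi := Real.pi_pos
  by_cases hP : A p = A r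
  · rw [hP, angle_self_left]; linarith
  by_cases hQ : A q = A r
  · rw [angle_comm, hQ, angle_self_left]
    linarith
  by_contra h
  push_neg at h
  have hcos : (1:ℝ)/2 ≤ Real.cos (∠ (A p) (A r) (A q)) := by
    have := Real.cos_le_cos_of_nonneg_of_le_pi (EuclideanGeometry.angle_nonneg _ _ _)
      (by linarith : Real.pi/3 ≤ Real.pi) h
    simpa [Real.cos_pi_div_three] using this
  have hlaw := EuclideanGeometry.law_cos (A p) (A r) (A q)
  have ha : 0 < dist (A p) (A r) := dist_pos.2 hP
  have hb : 0 < dist (A q) (A r) := dist_pos.2 hQ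
  have hc : dist (A q) (A p) = dist (A p) (A q) := dist_comm _ _
  rw [hc] at h2
  nlinarith [mul_pos ha hb, sq_nonneg (dist (A p) (A r) - dist (A q) (A r)),
    mul_pos (sub_pos.2 h1) (sub_pos.2 h2)]
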